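/- Let a > 0 and b, τ be real numbers, and define g₀(x) = -a x² + 2 b x. Then sup_{x ∈ ℝ} [ (τ − x)₊ + g₀(x) ] equals b²/a if τ ≤ b/a − 1/(4a), and equals τ + (b − 1/2)²/a if τ > b/a − 1/(4a). -/

import Mathlib

/-- Lemma 2.3: for `a > 0`, the supremum over `x ∈ ℝ` of `(τ - x)₊ + g₀(x)` with
`g₀(x) = -a x² + 2 b x` admits a two-case closed form. -/
theorem stmt_2 (a b τ : ℝ) (ha : 0 < a) :
    (⨆ x : ℝ, max (τ - x) 0 + (-a * x ^ 2 + 2 * b * x)) =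
      if τ ≤ b / a - 1 / (4 * a) then b ^ 2 / a
      else τ + (b - 1 / 2) ^ 2 / a := by
  have ha' : a ≠ 0 := ne_of_gt ha
  have e : b / a - 1 / (4 * a) = (b - 1 / 4) / a := by field_simp
  rw [e]
  split_ifs with h
  · -- case τ ≤ (b - 1/4)/a, sup = b²/a
    rw [le_div_iff₀ ha] at h
    have hb : ∀ x : ℝ, max (τ - x) 0 + (-a * x ^ 2 + 2 * b * x) ≤ b ^ 2 / a := by
      intro x
      rcases le_total (τ - x) 0 with hx | hx
      · rw [max_eq_right hx, le_div_iff₀ ha]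
        nlinarith [sq_nonneg (a * x - b)]
      · rw [max_eq_left hx, le_div_iff₀ ha]
        nlinarith [sq_nonneg (a * x - b + 1 / 2)]
    apply le_antisymm (ciSup_le hb)
    have hx0 : max (τ - b / a) 0 + (-a * (b / a) ^ 2 + 2 * b * (b / a)) = b ^ 2 / a := by
      have h1 : τ - b / a ≤ 0 := by
        rw [sub_nonpos, le_div_iff₀ ha]
        nlinarith
      rw [max_eq_right h1]
      field_simp
      ring
    calc b ^ 2 / a = max (τ - b / a) 0 + (-a * (b / a) ^ 2 + 2 * b * (b / a)) := hx0.symm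
      _ ≤ _ := le_ciSup ⟨b ^ 2 / a, Set.forall_mem_range.2 hb⟩ (b / a)
  · -- case τ > (b - 1/4)/a
    push_neg at h
    rw [div_lt_iff₀ ha] at h
    have hb : ∀ x : ℝ, max (τ - x) 0 + (-a * x ^ 2 + 2 * b * x) ≤ τ + (b - 1 / 2) ^ 2 / a := by
      intro x
      rcases le_total (τ - x) 0 with hx | hx
      · rw [max_eq_right hx, ← mul_le_mul_iff_of_pos_left ha]
        have : a * (τ + (b - 1 / 2) ^ 2 / a) = a * τ + (b - 1 / 2) ^ 2 := by
          field_simp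
        rw [this]
        nlinarith [sq_nonneg (a * x - b)]
      · rw [max_eq_left hx, ← mul_le_mul_iff_of_pos_left ha]
        have : a * (τ + (b - 1 / 2) ^ 2 / a) = a * τ + (b - 1 / 2) ^ 2 := by
          field_simp
        rw [this]
        nlinarith [sq_nonneg (a * x - b + 1 / 2)]
    apply le_antisymm (ciSup_le hb)
    set x₀ : ℝ := (b - 1 / 2) / a with hx₀
    have hx0 : max (τ - x₀) 0 + (-a * x₀ ^ 2 + 2 * b * x₀) = τ + (b - 1 / 2) ^ 2 / a := by
      have h1 : 0 ≤ τ - x₀ := by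
        rw [sub_nonneg, hx₀, div_le_iff₀ ha]
        nlinarith
      rw [max_eq_left h1, hx₀]
      field_simp
      ring
    calc τ + (b - 1 / 2) ^ 2 / a
        = max (τ - x₀) 0 + (-a * x₀ ^ 2 + 2 * b * x₀) := hx0.symm
      _ ≤ _ := le_ciSup ⟨τ + (b - 1 / 2) ^ 2 / a, Set.forall_mem_range.2 hb⟩ x₀
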